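/- Let Q ≪ P with density f, 𝓐 ⊂ 𝓑 a sub-σ-field, μ a regular conditional distribution for P given 𝓐, and A₁ = {ω : 0 < ∫ f dμ(ω) < ∞}. Then A₁ ∈ 𝓐, Q(A₁) = 1, and the map ν defined on A₁ by ν(ω)(B) = (∫_B f dμ(ω)) / (∫ f dμ(ω)) (arbitrarily extended off A₁) is a regular conditional distribution for Q given 𝓐. -/

import Mathlib

open MeasureTheory MeasurableSpace Set Filter
open scoped ENNReal

/-- A regular conditional distribution for `P` given the sub-σ-field `𝓐`. -/
def IsRCD {Ω : Type*} [m𝓑 : MeasurableSpace Ω] (𝓐 : MeasurableSpace Ω)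
    (P : @Measure Ω m𝓑) (μ : Ω → @Measure Ω m𝓑) : Prop :=
  (∀ ω, IsProbabilityMeasure (μ ω)) ∧
  (∀ B : Set Ω, MeasurableSet[m𝓑] B → Measurable[𝓐] fun ω => μ ω B) ∧
  (∀ B : Set Ω, MeasurableSet[m𝓑] B → ∀ A : Set Ω, MeasurableSet[𝓐] A →
    ∫⁻ ω in A, μ ω B ∂P = P (A ∩ B))

section Helpers
variable {Ω' : Type*} {m : MeasurableSpace Ω'}

theorem hlp_const_mul {f : Ω' → ℝ≥0∞} (hf : Measurable[m] f) (c : ℝ≥0∞) :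
    Measurable[m] fun ω => c * f ω := hf.const_mul c

theorem hlp_mul {f g : Ω' → ℝ≥0∞} (hf : Measurable[m] f) (hg : Measurable[m] g) :
    Measurable[m] fun ω => f ω * g ω := hf.mul hg

theorem hlp_inv {f : Ω' → ℝ≥0∞} (hf : Measurable[m] f) :
    Measurable[m] fun ω => (f ω)⁻¹ := hf.inv

theorem hlp_indicator {f : Ω' → ℝ≥0∞} (hf : Measurable[m] f) {s : Set Ω'}
    (hs : MeasurableSet[m] s) : Measurable[m] (s.indicator f) := hf.indicator hs

theorem hlp_lt {f g : Ω' → ℝ≥0∞} (hf : Measurable[m] f) (hg : Measurable[m] g) :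
    MeasurableSet[m] {ω | f ω < g ω} := measurableSet_lt hf hg

theorem hlp_piecewise {s : Set Ω'} [∀ j, Decidable (j ∈ s)] (hs : MeasurableSet[m] s)
    {f g : Ω' → ℝ≥0∞} (hf : Measurable[m] f) (hg : Measurable[m] g) :
    Measurable[m] (s.piecewise f g) := Measurable.piecewise hs hf hg

end Helpers

/-- Measurability of `ω ↦ ∫⁻ φ ∂(μ ω)` with respect to the sub-σ-field. -/
theorem measG_aux {Ω : Type*} {m𝓑 : MeasurableSpace Ω} {𝓐 : MeasurableSpace Ω}
    {μ : Ω → @Measure Ω m𝓑}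
    (hmeas : ∀ B : Set Ω, MeasurableSet[m𝓑] B → Measurable[𝓐] fun ω => μ ω B)
    {φ : Ω → ℝ≥0∞} (hφ : Measurable[m𝓑] φ) :
    Measurable[𝓐] fun ω => ∫⁻ x, φ x ∂(μ ω) := by
  refine Measurable.ennreal_induction
    (motive := fun φ => Measurable[𝓐] fun ω => ∫⁻ x, φ x ∂(μ ω)) ?_ ?_ ?_ hφ
  ·
      intro c s hs
      simp_rw [lintegral_indicator_const hs]
      exact (hmeas s hs).const_mul c
  ·
      intro f g hdis hf hg Pf Pg
      simp_rw [Pi.add_apply, lintegral_add_left hf]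
      exact Pf.add Pg
  ·
      intro f hf hmono Pf
      have : (fun ω => ∫⁻ x, ⨆ n, f n x ∂(μ ω))
          = fun ω => ⨆ n, ∫⁻ x, f n x ∂(μ ω) := by
        funext ω
        exact lintegral_iSup hf hmono
      rw [this]
      exact Measurable.iSup Pf

/-- `μ ω B` acts as conditional probability of `B`. -/
theorem lemA_aux {Ω : Type*} {m𝓑 : MeasurableSpace Ω} {𝓐 : MeasurableSpace Ω}
    (h𝓐 : 𝓐 ≤ m𝓑) (P : @Measure Ω m𝓑) {μ : Ω → @Measure Ω m𝓑}
    (hmeas : ∀ B : Set Ω, MeasurableSet[m𝓑] B → Measurable[𝓐] fun ω => μ ω B)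
    (hint : ∀ B : Set Ω, MeasurableSet[m𝓑] B → ∀ A : Set Ω, MeasurableSet[𝓐] A →
      ∫⁻ ω in A, μ ω B ∂P = P (A ∩ B))
    {B : Set Ω} (hB : MeasurableSet[m𝓑] B)
    {ψ : Ω → ℝ≥0∞} (hψ : Measurable[𝓐] ψ) :
    ∫⁻ ω, ψ ω * μ ω B ∂P = ∫⁻ ω in B, ψ ω ∂P := by
  refine @Measurable.ennreal_induction Ω 𝓐
    (fun ψ => ∫⁻ ω, ψ ω * μ ω B ∂P = ∫⁻ ω in B, ψ ω ∂P) ?_ ?_ ?_ ψ hψ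
  ·
      intro c s hs
      have h1 : ∀ ω, s.indicator (fun _ => c) ω * μ ω B
          = s.indicator (fun ω => c * μ ω B) ω := by
        intro ω; by_cases h : ω ∈ s <;> simp [h]
      rw [lintegral_congr h1, lintegral_indicator (h𝓐 _ hs),
        lintegral_const_mul c ((hmeas B hB).mono h𝓐 le_rfl),
        hint B hB s hs, lintegral_indicator (h𝓐 _ hs), setLIntegral_const,
        Measure.restrict_apply (h𝓐 _ hs), inter_comm]
  ·
      intro f g hdis hf hg Pf Pg
      have hfm : Measurable[m𝓑] f := hf.mono h𝓐 le_rfl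
      have hgm : Measurable[m𝓑] g := hg.mono h𝓐 le_rfl
      have hμm : Measurable[m𝓑] fun ω => μ ω B := (hmeas B hB).mono h𝓐 le_rfl
      simp_rw [Pi.add_apply, add_mul]
      rw [lintegral_add_left (hlp_mul hfm hμm), Pf, Pg, ← lintegral_add_left hfm]
  ·
      intro f hf hmono Pf
      have hfm : ∀ n, Measurable[m𝓑] (f n) := fun n => (hf n).mono h𝓐 le_rfl
      have hμm : Measurable[m𝓑] fun ω => μ ω B := (hmeas B hB).mono h𝓐 le_rfl
      simp_rw [ENNReal.iSup_mul]
      rw [lintegral_iSup (fun n => hlp_mul (hfm n) hμm)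
        (fun i j hij ω => mul_le_mul_left (hmono hij ω) _),
        lintegral_iSup hfm hmono]
      exact iSup_congr Pf

/-- Conditional-expectation identity against 𝓐-measurable weights. -/
theorem lemB_aux {Ω : Type*} {m𝓑 : MeasurableSpace Ω} {𝓐 : MeasurableSpace Ω}
    (h𝓐 : 𝓐 ≤ m𝓑) (P : @Measure Ω m𝓑) {μ : Ω → @Measure Ω m𝓑}
    (hmeas : ∀ B : Set Ω, MeasurableSet[m𝓑] B → Measurable[𝓐] fun ω => μ ω B)
    (hint : ∀ B : Set Ω, MeasurableSet[m𝓑] B → ∀ A : Set Ω, MeasurableSet[𝓐] A →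
      ∫⁻ ω in A, μ ω B ∂P = P (A ∩ B))
    {φ : Ω → ℝ≥0∞} (hφ : Measurable[m𝓑] φ)
    {ψ : Ω → ℝ≥0∞} (hψ : Measurable[𝓐] ψ) :
    ∫⁻ ω, ψ ω * ∫⁻ x, φ x ∂(μ ω) ∂P = ∫⁻ ω, ψ ω * φ ω ∂P := by
  refine Measurable.ennreal_induction
    (motive := fun φ => ∫⁻ ω, ψ ω * ∫⁻ x, φ x ∂(μ ω) ∂P = ∫⁻ ω, ψ ω * φ ω ∂P) ?_ ?_ ?_ hφ
  ·
      intro c s hs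
      simp_rw [lintegral_indicator_const hs]
      have h1 : ∀ ω, ψ ω * (c * μ ω s) = (c * ψ ω) * μ ω s := by
        intro ω; ring
      rw [lintegral_congr h1, lemA_aux h𝓐 P hmeas hint hs (hlp_const_mul (m := 𝓐) hψ c)]
      have h2 : ∀ ω, ψ ω * s.indicator (fun _ => c) ω
          = s.indicator (fun ω => c * ψ ω) ω := by
        intro ω; by_cases h : ω ∈ s <;> simp [h, mul_comm]
      rw [lintegral_congr h2, lintegral_indicator hs]
  ·
      intro f g hdis hf hg Pf Pg
      have hψm : Measurable[m𝓑] ψ := hψ.mono h𝓐 le_rfl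
      have hGf : Measurable[m𝓑] fun ω => ∫⁻ x, f x ∂(μ ω) :=
        (measG_aux hmeas hf).mono h𝓐 le_rfl
      simp_rw [Pi.add_apply, lintegral_add_left hf, mul_add]
      rw [lintegral_add_left (hlp_mul hψm hGf), Pf, Pg,
        ← lintegral_add_left (hlp_mul hψm hf)]
  ·
      intro f hf hmono Pf
      have hψm : Measurable[m𝓑] ψ := hψ.mono h𝓐 le_rfl
      have hGf : ∀ n, Measurable[m𝓑] fun ω => ∫⁻ x, f n x ∂(μ ω) :=
        fun n => (measG_aux hmeas (hf n)).mono h𝓐 le_rfl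
      have h1 : ∀ ω, ∫⁻ x, ⨆ n, f n x ∂(μ ω) = ⨆ n, ∫⁻ x, f n x ∂(μ ω) :=
        fun ω => lintegral_iSup hf hmono
      simp_rw [h1, ENNReal.mul_iSup]
      rw [lintegral_iSup (fun n => hlp_mul hψm (hGf n))
        (fun i j hij ω => mul_le_mul_right ((lintegral_mono (hmono hij)) ) _),
        lintegral_iSup (fun n => hlp_mul hψm (hf n))
        (fun i j hij ω => mul_le_mul_right (hmono hij ω) _)]
      exact iSup_congr Pf

/-- If Q ≪ P with density f, then A₁ = {ω : 0 < ∫ f dμ(ω) < ∞} is an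
𝓐-measurable Q-full set, and the normalized density kernel ν is an r.c.d. for Q
given 𝓐. -/
theorem stmt_9 {Ω : Type*} [m𝓑 : MeasurableSpace Ω]
    (P Q : @Measure Ω m𝓑) (hP : IsProbabilityMeasure P) (hQprob : IsProbabilityMeasure Q)
    (𝓐 : MeasurableSpace Ω) (h𝓐 : 𝓐 ≤ m𝓑)
    (f : Ω → ℝ≥0∞) (hf : Measurable[m𝓑] f) (hQ : Q = P.withDensity f)
    (μ : Ω → @Measure Ω m𝓑) (hμ : @IsRCD Ω m𝓑 𝓐 P μ)
    (A₁ : Set Ω) (hA₁ : A₁ = {ω | 0 < ∫⁻ x, f x ∂(μ ω) ∧ ∫⁻ x, f x ∂(μ ω) < ∞})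
    (ν : Ω → @Measure Ω m𝓑)
    (hν : ∀ ω ∈ A₁, ν ω = (∫⁻ x, f x ∂(μ ω))⁻¹ • (μ ω).withDensity f)
    (hνout : ∀ ω ∉ A₁, ν ω = P) :
    MeasurableSet[𝓐] A₁ ∧ Q A₁ = 1 ∧ @IsRCD Ω m𝓑 𝓐 Q ν := by
  classical
  letI m₂ : MeasurableSpace Ω := m𝓑
  obtain ⟨hprob, hmeasB, hint⟩ := hμ
  set g : Ω → ℝ≥0∞ := fun ω => ∫⁻ x, f x ∂(μ ω) with hg_def
  have hg : Measurable[𝓐] g := measG_aux hmeasB hf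
  have hgm : Measurable[m𝓑] g := hg.mono h𝓐 le_rfl
  -- A₁ is 𝓐-measurable
  have hA₁' : A₁ = {ω | 0 < g ω} ∩ {ω | g ω < ∞} := by
    rw [hA₁]; ext ω; simp [Set.mem_setOf_eq, hg_def]
  have hA₁meas : MeasurableSet[𝓐] A₁ := by
    rw [hA₁']
    exact (hlp_lt (m := 𝓐) (@measurable_const ℝ≥0∞ Ω _ 𝓐 _) hg).inter
      (hlp_lt (m := 𝓐) hg (@measurable_const ℝ≥0∞ Ω _ 𝓐 _))
  -- key conditional expectation identity (set version)
  have key : ∀ (φ : Ω → ℝ≥0∞), Measurable[m𝓑] φ → ∀ (A : Set Ω), MeasurableSet[𝓐] A →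
      ∫⁻ ω in A, ∫⁻ x, φ x ∂(μ ω) ∂P = ∫⁻ ω in A, φ ω ∂P := by
    intro φ hφ A hA
    have hψ : Measurable[𝓐] (A.indicator (fun _ => (1:ℝ≥0∞))) :=
      hlp_indicator (m := 𝓐) (@measurable_const ℝ≥0∞ Ω _ 𝓐 _) hA
    have := lemB_aux h𝓐 P hmeasB hint hφ hψ
    rw [← lintegral_indicator (h𝓐 _ hA), ← lintegral_indicator (h𝓐 _ hA)]
    have e1 : ∀ ω, A.indicator (fun ω => ∫⁻ x, φ x ∂(μ ω)) ω
        = A.indicator (fun _ => (1:ℝ≥0∞)) ω * ∫⁻ x, φ x ∂(μ ω) := by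
      intro ω; by_cases h : ω ∈ A <;> simp [h]
    have e2 : ∀ ω, A.indicator φ ω
        = A.indicator (fun _ => (1:ℝ≥0∞)) ω * φ ω := by
      intro ω; by_cases h : ω ∈ A <;> simp [h]
    rw [lintegral_congr e1, lintegral_congr e2]
    exact this
  -- Q-measure of A₁ᶜ is zero
  have hS0meas : MeasurableSet[𝓐] {ω | g ω = 0} := hg (measurableSet_singleton 0)
  have hQS0 : Q {ω | g ω = 0} = 0 := by
    rw [hQ, withDensity_apply f (h𝓐 _ hS0meas), ← key f hf _ hS0meas]
    rw [setLIntegral_congr_fun (h𝓐 _ hS0meas) (fun ω h => h)]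
    simp
  have hgint : ∫⁻ ω, g ω ∂P = 1 := by
    have h1 := key f hf Set.univ MeasurableSet.univ
    simp only [setLIntegral_univ] at h1
    rw [h1, ← setLIntegral_univ, ← withDensity_apply f MeasurableSet.univ, ← hQ]
    exact hQprob.measure_univ
  have hPinf : P {ω | g ω = ∞} = 0 := by
    have h := ae_lt_top hgm (by rw [hgint]; exact ENNReal.one_ne_top)
    rw [ae_iff] at h
    convert h using 2
    ext ω; simp [lt_top_iff_ne_top]
  have hQA₁c : Q A₁ᶜ = 0 := by
    have hsub : A₁ᶜ ⊆ {ω | g ω = 0} ∪ {ω | g ω = ∞} := by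
      intro ω hω
      rw [hA₁'] at hω
      simp only [Set.mem_compl_iff, Set.mem_inter_iff, Set.mem_setOf_eq, not_and_or] at hω
      rcases hω with h | h
      · left; simpa [pos_iff_ne_zero] using h
      · right; simpa [lt_top_iff_ne_top] using h
    have : Q ({ω | g ω = 0} ∪ {ω | g ω = ∞}) = 0 := by
      refine le_antisymm ?_ zero_le
      calc Q ({ω | g ω = 0} ∪ {ω | g ω = ∞})
          ≤ Q {ω | g ω = 0} + Q {ω | g ω = ∞} := measure_union_le _ _
        _ = 0 := by
            rw [hQS0, hQ, (withDensity_absolutelyContinuous P f) hPinf]; simp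
    exact le_antisymm (le_trans (measure_mono hsub) this.le) zero_le
  have hQA₁ : Q A₁ = 1 := by
    rw [← prob_compl_eq_zero_iff (h𝓐 _ hA₁meas)]
    exact hQA₁c
  refine ⟨hA₁meas, hQA₁, ?_, ?_, ?_⟩
  · -- probability measures
    intro ω
    by_cases h : ω ∈ A₁
    · have h' := h
      rw [hA₁'] at h'
      obtain ⟨h0, htop⟩ := h'
      refine ⟨?_⟩
      rw [hν ω h, Measure.smul_apply, withDensity_apply f MeasurableSet.univ,
        setLIntegral_univ, smul_eq_mul]
      exact ENNReal.inv_mul_cancel h0.ne' htop.ne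
    · rw [hνout ω h]; exact hP
  · -- measurability
    intro B hB
    have hH : Measurable[𝓐] fun ω => ∫⁻ x, B.indicator f x ∂(μ ω) :=
      measG_aux hmeasB (hf.indicator hB)
    have : (fun ω => ν ω B) = A₁.piecewise
        (fun ω => (g ω)⁻¹ * ∫⁻ x, B.indicator f x ∂(μ ω)) (fun _ => P B) := by
      funext ω
      by_cases h : ω ∈ A₁
      · rw [Set.piecewise_eq_of_mem _ _ _ h, hν ω h, Measure.smul_apply, smul_eq_mul,
          withDensity_apply f hB, ← lintegral_indicator hB]
      · rw [Set.piecewise_eq_of_notMem _ _ _ h, hνout ω h]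
    rw [this]
    exact hlp_piecewise (m := 𝓐) hA₁meas (hlp_mul (m := 𝓐) (hlp_inv (m := 𝓐) hg) hH) (@measurable_const ℝ≥0∞ Ω _ 𝓐 _)
  · -- the integral identity
    intro B hB A hA
    set A' : Set Ω := A ∩ A₁ with hA'def
    have hA'meas : MeasurableSet[𝓐] A' := hA.inter hA₁meas
    set H : Ω → ℝ≥0∞ := fun ω => ∫⁻ x, B.indicator f x ∂(μ ω) with hH_def
    have hHmeas : Measurable[𝓐] H := measG_aux hmeasB (hf.indicator hB)
    set Ψ : Ω → ℝ≥0∞ := A'.indicator (fun ω => (g ω)⁻¹ * H ω) with hΨ_def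
    have hΨmeas : Measurable[𝓐] Ψ := hlp_indicator (m := 𝓐) (hlp_mul (m := 𝓐) (hlp_inv (m := 𝓐) hg) hHmeas) hA'meas
    have hΨm : Measurable[m𝓑] Ψ := hΨmeas.mono h𝓐 le_rfl
    have haeA₁ : ∀ᵐ ω ∂Q, ω ∈ A₁ := by
      rw [ae_iff]
      exact hQA₁c
    -- step 1
    have step1 : ∫⁻ ω in A, ν ω B ∂Q = ∫⁻ ω, Ψ ω ∂Q := by
      rw [← lintegral_indicator (h𝓐 _ hA)]
      refine lintegral_congr_ae ?_
      filter_upwards [haeA₁] with ω h1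
      by_cases h : ω ∈ A
      · rw [Set.indicator_of_mem h, hΨ_def,
          Set.indicator_of_mem (Set.mem_inter h h1), hν ω h1, Measure.smul_apply,
          smul_eq_mul, withDensity_apply f hB, hH_def, ← lintegral_indicator hB]
      · rw [Set.indicator_of_notMem h, hΨ_def,
          Set.indicator_of_notMem (fun hc => h hc.1)]
    -- step 2–3
    have step2 : ∫⁻ ω, Ψ ω ∂Q = ∫⁻ ω, Ψ ω * g ω ∂P := by
      rw [hQ, lintegral_withDensity_eq_lintegral_mul P hf hΨm]
      have : ∀ ω, (f * Ψ) ω = Ψ ω * f ω := fun ω => mul_comm _ _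
      rw [lintegral_congr this, ← lemB_aux h𝓐 P hmeasB hint hf hΨmeas]
    -- step 4
    have step4 : ∀ ω, Ψ ω * g ω = A'.indicator H ω := by
      intro ω
      by_cases h : ω ∈ A'
      · have h1 : ω ∈ A₁ := h.2
        rw [hA₁'] at h1
        rw [hΨ_def, Set.indicator_of_mem h, Set.indicator_of_mem h,
          mul_right_comm, ENNReal.inv_mul_cancel h1.1.ne' h1.2.ne, one_mul]
      · rw [hΨ_def, Set.indicator_of_notMem h, Set.indicator_of_notMem h, zero_mul]
    -- step 5
    have step5 : ∫⁻ ω, A'.indicator H ω ∂P = Q (A' ∩ B) := by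
      rw [lintegral_indicator (h𝓐 _ hA'meas), hH_def, key _ (hf.indicator hB) _ hA'meas,
        ← lintegral_indicator (h𝓐 _ hA'meas)]
      have : ∀ ω, A'.indicator (B.indicator f) ω = (A' ∩ B).indicator f ω := by
        intro ω
        by_cases h1 : ω ∈ A' <;> by_cases h2 : ω ∈ B <;>
          simp [Set.indicator, h1, h2, Set.mem_inter_iff]
      rw [lintegral_congr this, lintegral_indicator ((h𝓐 _ hA'meas).inter hB),
        hQ, withDensity_apply f ((h𝓐 _ hA'meas).inter hB)]
    -- step 6
    have step6 : Q (A' ∩ B) = Q (A ∩ B) := by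
      have := measure_inter_add_diff (μ := Q) (A ∩ B) (h𝓐 _ hA₁meas)
      have hdiff : Q ((A ∩ B) \ A₁) = 0 := by
        refine le_antisymm (le_trans (measure_mono ?_) hQA₁c.le) zero_le
        intro ω hω; exact hω.2
      have hset : (A ∩ B) ∩ A₁ = A' ∩ B := by
        ext ω; constructor
        · rintro ⟨⟨h1, h2⟩, h3⟩; exact ⟨⟨h1, h3⟩, h2⟩
        · rintro ⟨⟨h1, h3⟩, h2⟩; exact ⟨⟨h1, h2⟩, h3⟩
      rw [hset, hdiff, add_zero] at this
      exact this
    rw [step1, step2, lintegral_congr step4, step5, step6]
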